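/- arXiv:2511.05440 — 7 statements merged into one kernel-verified Lean document; each statement's English description precedes it below -/
import Mathlib

section
/- Let G be a k×n matrix over F₂ generating a linear code C. Then the rank of G·Gᵀ equals k minus the dimension of the hull of C, where the hull of C is the intersection of C with its dual code C⊥ = {x ∈ F₂ⁿ : x·y = 0 for all y ∈ C}. -/
open Matrix

/-- The dual code of a binary code `C`: all vectors orthogonal to every codeword. -/
def dualCode {ι : Type*} [Fintype ι] (C : Submodule (ZMod 2) (ι → ZMod 2)) :
    Submodule (ZMod 2) (ι → ZMod 2) where
  carrier := {x | ∀ c ∈ C, x ⬝ᵥ c = 0}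
  add_mem' := by
    intro a b ha hb c hc
    simp [add_dotProduct, ha c hc, hb c hc]
  zero_mem' := by
    intro c hc
    simp
  smul_mem' := by
    intro r a ha c hc
    simp [smul_dotProduct, ha c hc]

/-- The row space (the code generated by the rows) of a matrix over `F₂`. -/
def rowSpace {k : ℕ} {ι : Type*} [Fintype ι] (G : Matrix (Fin k) ι (ZMod 2)) :
    Submodule (ZMod 2) (ι → ZMod 2) :=
  Submodule.span (ZMod 2) (Set.range fun i => G i)

/-- The hull of a binary code: `C ∩ C⊥`. -/
def hullCode {ι : Type*} [Fintype ι] (C : Submodule (ZMod 2) (ι → ZMod 2)) :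
    Submodule (ZMod 2) (ι → ZMod 2) :=
  C ⊓ dualCode C

/-- rank(G·Gᵀ) = k − dim Hull(C) for a generator matrix G of a binary code C. -/
theorem stmt_0 {k n : ℕ} (G : Matrix (Fin k) (Fin n) (ZMod 2))
    (hG : LinearIndependent (ZMod 2) (fun i => G i)) :
    (G * Gᵀ).rank = k - Module.finrank (ZMod 2) ↥(hullCode (rowSpace G)) := by
  classical
  set f := (G * Gᵀ).mulVecLin with hf
  set g := Gᵀ.mulVecLin with hg
  have hgsum : ∀ v : Fin k → ZMod 2, g v = ∑ i, v i • G i := by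
    intro v; ext j
    simp [hg, mulVecLin, mulVec, vecMul, dotProduct, Finset.sum_apply, mul_comm]
  -- g is injective
  have hginj : Function.Injective g := by
    rw [injective_iff_map_eq_zero]
    intro v hv
    have := Fintype.linearIndependent_iff.mp hG v (by rw [← hgsum v, hv])
    funext i; exact this i
  -- g maps into the row space
  have hgmem : ∀ v, g v ∈ rowSpace G := by
    intro v
    rw [hgsum]
    exact Submodule.sum_mem _ fun i _ =>
      Submodule.smul_mem _ _ (Submodule.subset_span ⟨i, rfl⟩)
  -- membership in ker f vs dual code
  have hker : ∀ v : Fin k → ZMod 2, v ∈ LinearMap.ker f ↔ g v ∈ dualCode (rowSpace G) := by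
    intro v
    have hfv : f v = G *ᵥ (g v) := by
      simp [hf, hg, Matrix.mulVecLin_mul]
    constructor
    · intro hv c hc
      have hv0 : G *ᵥ (g v) = 0 := by rw [← hfv]; exact hv
      -- every row is orthogonal to g v
      have hrow : ∀ i, G i ⬝ᵥ g v = 0 := fun i => congrFun hv0 i
      -- extend to all of rowSpace by span induction
      induction hc using Submodule.span_induction with
      | mem x hx =>
          obtain ⟨i, rfl⟩ := hx
          rw [dotProduct_comm]; exact hrow i
      | zero => simp
      | add x y _ _ hx hy => rw [dotProduct_add, hx, hy, add_zero]
      | smul r x _ hx => rw [dotProduct_smul, hx, smul_zero]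
    · intro hv
      have : ∀ i, (G *ᵥ (g v)) i = 0 := by
        intro i
        have := hv (G i) (Submodule.subset_span ⟨i, rfl⟩)
        rw [dotProduct_comm] at this
        exact this
      rw [LinearMap.mem_ker, hfv]
      funext i; exact this i
  -- equivalence between ker f and the hull
  let φ : LinearMap.ker f →ₗ[ZMod 2] hullCode (rowSpace G) :=
    LinearMap.codRestrict _ (g.comp (LinearMap.ker f).subtype)
      (fun v => ⟨hgmem v, (hker v).mp v.2⟩)
  have hφbij : Function.Bijective φ := by
    constructor
    · intro a b hab
      have : g a = g b := congrArg Subtype.val hab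
      exact Subtype.ext (hginj this)
    · rintro ⟨x, hxC, hxD⟩
      have : x ∈ rowSpace G := hxC
      -- x is in the span of the rows, hence in range of g
      have hx : ∃ v, g v = x := by
        have hrange : rowSpace G ≤ LinearMap.range g := by
          rw [rowSpace, Submodule.span_le]
          rintro _ ⟨i, rfl⟩
          exact ⟨Pi.single i 1, by rw [hgsum]; simp [Pi.single_apply, ite_smul]; exact (Finset.sum_eq_single i (fun b _ hb => if_neg hb) (by simp)).trans (if_pos rfl)⟩
        obtain ⟨v, hv⟩ := hrange this
        exact ⟨v, hv⟩
      obtain ⟨v, hv⟩ := hx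
      have hvker : v ∈ LinearMap.ker f := (hker v).mpr (by rw [hv]; exact hxD)
      exact ⟨⟨v, hvker⟩, Subtype.ext hv⟩
  have hdim : Module.finrank (ZMod 2) (LinearMap.ker f) =
      Module.finrank (ZMod 2) (hullCode (rowSpace G)) :=
    (LinearEquiv.ofBijective φ hφbij).finrank_eq
  have hrn := LinearMap.finrank_range_add_finrank_ker f
  rw [Module.finrank_pi] at hrn
  simp only [Fintype.card_fin] at hrn
  have : (G * Gᵀ).rank = Module.finrank (ZMod 2) (LinearMap.range f) := rfl
  omega
end

section
/- Let C ⊆ F₂ⁿ be a linear code of dimension k with generator matrix G, and let C₁ be the code generated by G₁ = [G | v] for some column vector v ∈ F₂ᵏ. If ℓ = dim(Hull(C)) and ℓ₁ = dim(Hull(C₁)), then ℓ − 1 ≤ ℓ₁ ≤ ℓ + 1. -/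
open Matrix

lemma mem_dualCode {ι : Type*} [Fintype ι] (C : Submodule (ZMod 2) (ι → ZMod 2))
    (x : ι → ZMod 2) : x ∈ dualCode C ↔ ∀ c ∈ C, x ⬝ᵥ c = 0 := Iff.rfl

/-- Intersecting with the kernel of a functional costs at most one dimension. -/
lemma rank_inf_ker {K V : Type*} [Field K] [AddCommGroup V] [Module K V]
    [FiniteDimensional K V] (p : Submodule K V) (f : V →ₗ[K] K) :
    Module.finrank K p ≤ Module.finrank K ↥(p ⊓ LinearMap.ker f) + 1 := by
  set g := f ∘ₗ p.subtype with hg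
  have h1 : Module.finrank K (LinearMap.range g) + Module.finrank K (LinearMap.ker g)
      = Module.finrank K p := LinearMap.finrank_range_add_finrank_ker g
  have h2 : Module.finrank K (LinearMap.range g) ≤ 1 := by
    simpa using Submodule.finrank_le (LinearMap.range g)
  have hker : LinearMap.ker g = Submodule.comap p.subtype (LinearMap.ker f) :=
    LinearMap.ker_comp _ _
  have h3 : Module.finrank K (LinearMap.ker g)
      = Module.finrank K ↥(p ⊓ LinearMap.ker f) := by
    rw [hker]
    rw [((Submodule.comap p.subtype (LinearMap.ker f)).equivMapOfInjective p.subtype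
      p.injective_subtype).finrank_eq, Submodule.map_comap_subtype]
  omega

/-- appending a column to a generator matrix changes the hull dimension by
at most one. -/
theorem stmt_2 {k n : ℕ} (G : Matrix (Fin k) (Fin n) (ZMod 2))
    (hG : LinearIndependent (ZMod 2) (fun i => G i))
    (v : Fin k → ZMod 2) (G₁ : Matrix (Fin k) (Fin (n + 1)) (ZMod 2))
    (hG₁ : ∀ i, G₁ i = Fin.snoc (G i) (v i)) :
    Module.finrank (ZMod 2) ↥(hullCode (rowSpace G)) - 1 ≤
      Module.finrank (ZMod 2) ↥(hullCode (rowSpace G₁)) ∧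
    Module.finrank (ZMod 2) ↥(hullCode (rowSpace G₁)) ≤
      Module.finrank (ZMod 2) ↥(hullCode (rowSpace G)) + 1 := by
  -- the vecMul linear maps
  set S := G.vecMulLinear with hS
  set T := G₁.vecMulLinear with hT
  -- snoc description of rows of G₁
  have hsnoc : ∀ a : Fin k → ZMod 2, a ᵥ* G₁ = Fin.snoc (a ᵥ* G) (a ⬝ᵥ v) := by
    intro a
    ext j
    refine Fin.lastCases ?_ (fun j' => ?_) j
    · simp [Matrix.vecMul, dotProduct, hG₁]
    · simp [Matrix.vecMul, dotProduct, hG₁]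
  have key_dot : ∀ a b : Fin k → ZMod 2,
      (a ᵥ* G₁) ⬝ᵥ (b ᵥ* G₁) = (a ᵥ* G) ⬝ᵥ (b ᵥ* G) + (a ⬝ᵥ v) * (b ⬝ᵥ v) := by
    intro a b
    rw [hsnoc a, hsnoc b]
    simp [dotProduct, Fin.sum_univ_castSucc]
  have hSinj : Function.Injective S :=
    Matrix.vecMul_injective_iff.mpr hG
  have hTinj : Function.Injective T := by
    intro a b h
    apply hSinj
    have h' : (a ᵥ* G₁) = (b ᵥ* G₁) := h
    have := congrArg Fin.init h'
    rwa [hsnoc a, hsnoc b, Fin.init_snoc, Fin.init_snoc] at this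
  have hrangeS : LinearMap.range S = rowSpace G := range_vecMulLinear G
  have hrangeT : LinearMap.range T = rowSpace G₁ := range_vecMulLinear G₁
  -- pull back the hulls
  set A := Submodule.comap S (hullCode (rowSpace G)) with hA
  set A₁ := Submodule.comap T (hullCode (rowSpace G₁)) with hA₁
  have hle : hullCode (rowSpace G) ≤ LinearMap.range S := hrangeS ▸ inf_le_left
  have hle₁ : hullCode (rowSpace G₁) ≤ LinearMap.range T := hrangeT ▸ inf_le_left
  have e1 : Module.finrank (ZMod 2) ↥(hullCode (rowSpace G)) = Module.finrank (ZMod 2) A := by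
    rw [(A.equivMapOfInjective S hSinj).finrank_eq, Submodule.map_comap_eq_self hle]
  have e2 : Module.finrank (ZMod 2) ↥(hullCode (rowSpace G₁)) = Module.finrank (ZMod 2) A₁ := by
    rw [(A₁.equivMapOfInjective T hTinj).finrank_eq, Submodule.map_comap_eq_self hle₁]
  -- membership characterizations
  have memA : ∀ a, a ∈ A ↔ ∀ b, (a ᵥ* G) ⬝ᵥ (b ᵥ* G) = 0 := by
    intro a
    constructor
    · intro ha b
      exact ha.2 (b ᵥ* G) (hrangeS ▸ ⟨b, rfl⟩)
    · intro h
      refine ⟨hrangeS ▸ ⟨a, rfl⟩, ?_⟩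
      intro c hc
      rw [← hrangeS] at hc
      obtain ⟨b, rfl⟩ := hc
      exact h b
  have memA₁ : ∀ a, a ∈ A₁ ↔ ∀ b, (a ᵥ* G₁) ⬝ᵥ (b ᵥ* G₁) = 0 := by
    intro a
    constructor
    · intro ha b
      exact ha.2 (b ᵥ* G₁) (hrangeT ▸ ⟨b, rfl⟩)
    · intro h
      refine ⟨hrangeT ▸ ⟨a, rfl⟩, ?_⟩
      intro c hc
      rw [← hrangeT] at hc
      obtain ⟨b, rfl⟩ := hc
      exact h b
  -- the functional
  set f : (Fin k → ZMod 2) →ₗ[ZMod 2] ZMod 2 :=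
    { toFun := fun a => a ⬝ᵥ v
      map_add' := fun a b => add_dotProduct a b v
      map_smul' := fun r a => smul_dotProduct r a v } with hf
  have hAK : A ⊓ LinearMap.ker f ≤ A₁ := by
    rintro a ⟨ha, hk⟩
    rw [memA₁]
    intro b
    rw [key_dot, (memA a).1 ha b]
    have hk' : a ⬝ᵥ v = 0 := hk
    rw [hk', zero_mul, add_zero]
  have hKA : A₁ ⊓ LinearMap.ker f ≤ A := by
    rintro a ⟨ha, hk⟩
    rw [memA]
    intro b
    have h1 := key_dot a b
    have hk' : a ⬝ᵥ v = 0 := hk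
    rw [(memA₁ a).1 ha b, hk', zero_mul, add_zero] at h1
    exact h1.symm
  have d1 := rank_inf_ker A f
  have d2 := rank_inf_ker A₁ f
  have m1 : Module.finrank (ZMod 2) ↥(A ⊓ LinearMap.ker f) ≤ Module.finrank (ZMod 2) A₁ :=
    Submodule.finrank_mono hAK
  have m2 : Module.finrank (ZMod 2) ↥(A₁ ⊓ LinearMap.ker f) ≤ Module.finrank (ZMod 2) A :=
    Submodule.finrank_mono hKA
  omega
end

section
/- A binary linear code C with generator matrix G is linear complementary dual (LCD), i.e. Hull(C) = {0}, if and only if the matrix G·Gᵀ is invertible. -/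
open Matrix

lemma mem_rowSpace {k n : ℕ} (G : Matrix (Fin k) (Fin n) (ZMod 2)) (c : Fin n → ZMod 2) :
    c ∈ rowSpace G ↔ ∃ x, x ᵥ* G = c := by
  rw [rowSpace, show (Set.range fun i => G i) = Set.range G.row from rfl, ← range_vecMulLinear]
  simp [Matrix.vecMulLinear_apply]

/-- C is LCD (trivial hull) iff G·Gᵀ is invertible. -/
theorem stmt_4 {k n : ℕ} (G : Matrix (Fin k) (Fin n) (ZMod 2))
    (hG : LinearIndependent (ZMod 2) (fun i => G i)) :
    hullCode (rowSpace G) = ⊥ ↔ IsUnit (G * Gᵀ) := by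
  change LinearIndependent (ZMod 2) G.row at hG
  rw [← Matrix.vecMul_injective_iff] at hG
  rw [← Matrix.vecMul_injective_iff_isUnit]
  have key : ∀ x : Fin k → ZMod 2, (x ᵥ* G ∈ dualCode (rowSpace G)) ↔ x ᵥ* (G * Gᵀ) = 0 := by
    intro x
    constructor
    · intro h
      ext i
      have := h (G i) ((mem_rowSpace G (G i)).2 ⟨Pi.single i 1, by simp; rfl⟩)
      rw [Pi.zero_apply, ← this, ← Matrix.vecMul_vecMul, Matrix.vecMul_transpose]
      simp [Matrix.mulVec, dotProduct_comm]
    · intro h c hc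
      obtain ⟨y, rfl⟩ := (mem_rowSpace G c).1 hc
      have : (x ᵥ* G) ⬝ᵥ (y ᵥ* G) = (x ᵥ* (G * Gᵀ)) ⬝ᵥ y := by
        rw [← Matrix.vecMul_vecMul, Matrix.vecMul_transpose, dotProduct_comm _ y,
          Matrix.dotProduct_mulVec]
        exact dotProduct_comm _ _
      rw [this, h, zero_dotProduct]
  constructor
  · intro hbot
    intro a b hab
    have hab' : a ᵥ* (G * Gᵀ) = b ᵥ* (G * Gᵀ) := hab
    have h0 : (a - b) ᵥ* (G * Gᵀ) = 0 := by
      rw [Matrix.sub_vecMul, hab', sub_self]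
    have hx : (a - b) ᵥ* G ∈ hullCode (rowSpace G) :=
      ⟨(mem_rowSpace G _).2 ⟨a - b, rfl⟩, (key _).2 h0⟩
    rw [hbot, Submodule.mem_bot] at hx
    have : a - b = 0 := hG (by simpa using hx)
    exact sub_eq_zero.mp this
  · intro hinj
    rw [Submodule.eq_bot_iff]
    rintro c ⟨hc, hcd⟩
    obtain ⟨x, rfl⟩ := (mem_rowSpace G c).1 hc
    have := (key x).1 hcd
    have hx0 : x = 0 := hinj (show x ᵥ* (G * Gᵀ) = 0 ᵥ* (G * Gᵀ) by simp [this])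
    simp [hx0]
end

section
/- Let C be a binary linear code of length n and dimension k with ℓ = dim(Hull(C)). Then any self-orthogonal code C̃ of length n+s and dimension k obtained by appending s columns to a generator matrix of C satisfies s ≥ k − ℓ. -/
open Matrix

/-- any self-orthogonal code obtained by appending s columns to a generator
matrix of C satisfies s ≥ k − dim Hull(C). -/
theorem stmt_7 {k n s : ℕ} (G : Matrix (Fin k) (Fin n) (ZMod 2))
    (hG : LinearIndependent (ZMod 2) (fun i => G i))
    (S : Matrix (Fin k) (Fin s) (ZMod 2))
    (hSO : rowSpace (Matrix.fromCols G S) ≤ dualCode (rowSpace (Matrix.fromCols G S))) :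
    s ≥ k - Module.finrank (ZMod 2) ↥(hullCode (rowSpace G)) := by
  -- rows of the extended matrix are pairwise orthogonal
  have hrow : ∀ i j, G i ⬝ᵥ G j + S i ⬝ᵥ S j = 0 := by
    intro i j
    have hi : Matrix.fromCols G S i ∈ rowSpace (Matrix.fromCols G S) :=
      Submodule.subset_span ⟨i, rfl⟩
    have hj : Matrix.fromCols G S j ∈ rowSpace (Matrix.fromCols G S) :=
      Submodule.subset_span ⟨j, rfl⟩
    have h0 := hSO hi _ hj
    have hre : ∀ i, Matrix.fromCols G S i = Sum.elim (G i) (S i) := by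
      intro i; funext t; cases t <;> simp [Matrix.fromCols]
    rw [hre i, hre j, sumElim_dotProduct_sumElim] at h0
    exact h0
  have hA : G * Gᵀ = S * Sᵀ := by
    ext i j
    have := hrow i j
    have h1 : (G * Gᵀ) i j = G i ⬝ᵥ G j := by
      simp [Matrix.mul_apply, dotProduct]
    have h2 : (S * Sᵀ) i j = S i ⬝ᵥ S j := by
      simp [Matrix.mul_apply, dotProduct]
    rw [h1, h2]
    have h := add_eq_zero_iff_eq_neg.mp this
    rwa [CharTwo.neg_eq] at h
  classical
  set A := G * Gᵀ with hAdef
  have hhull : hullCode (rowSpace G)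
      = Submodule.map G.vecMulLinear (LinearMap.ker A.vecMulLinear) := by
    have key : ∀ c : Fin k → ZMod 2, ∀ j, (c ᵥ* A) j = (c ᵥ* G) ⬝ᵥ G j := by
      intro c j
      rw [hAdef, ← Matrix.vecMul_vecMul, Matrix.vecMul_transpose]
      exact dotProduct_comm _ _
    ext x
    constructor
    · rintro ⟨hx, hxd⟩
      have hx' : x ∈ LinearMap.range G.vecMulLinear := by
        rw [range_vecMulLinear]; exact hx
      obtain ⟨c, rfl⟩ := hx'
      refine ⟨c, ?_, rfl⟩
      simp only [SetLike.mem_coe, LinearMap.mem_ker]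
      funext j
      show (c ᵥ* A) j = 0
      rw [key c j]
      exact hxd (G j) (Submodule.subset_span ⟨j, rfl⟩)
    · rintro ⟨c, hc, rfl⟩
      simp only [SetLike.mem_coe, LinearMap.mem_ker] at hc
      constructor
      · have h2 : G.vecMulLinear c ∈ LinearMap.range G.vecMulLinear := ⟨c, rfl⟩
        rw [range_vecMulLinear] at h2
        exact h2
      · intro y hy
        induction hy using Submodule.span_induction with
        | mem y hy =>
            obtain ⟨j, rfl⟩ := hy
            have := congrFun hc j
            rw [Matrix.vecMulLinear_apply, key c j] at this
            simpa using this
        | zero => simp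
        | add y z _ _ hy hz =>
            simp only [Matrix.vecMulLinear_apply] at hy hz ⊢
            rw [dotProduct_add, hy, hz, add_zero]
        | smul r y _ hy =>
            simp only [Matrix.vecMulLinear_apply] at hy ⊢
            rw [dotProduct_smul, hy, smul_zero]
  have hinj : Function.Injective ⇑G.vecMulLinear := by
    rw [Matrix.coe_vecMulLinear]
    exact Matrix.vecMul_injective_iff.mpr hG
  have hker : Module.finrank (ZMod 2) ↥(hullCode (rowSpace G))
      = Module.finrank (ZMod 2) ↥(LinearMap.ker A.vecMulLinear) := by
    rw [hhull]
    exact (LinearEquiv.finrank_eq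
      ((LinearMap.ker A.vecMulLinear).equivMapOfInjective _ hinj)).symm
  have hrn := LinearMap.finrank_range_add_finrank_ker A.vecMulLinear
  rw [Module.finrank_fin_fun] at hrn
  have hle : LinearMap.range A.vecMulLinear ≤ LinearMap.range Sᵀ.vecMulLinear := by
    rintro _ ⟨c, rfl⟩
    refine ⟨c ᵥ* S, ?_⟩
    simp only [Matrix.vecMulLinear_apply]
    rw [Matrix.vecMul_vecMul, ← hA, hAdef]
  have hrange : Module.finrank (ZMod 2) ↥(LinearMap.range A.vecMulLinear) ≤ s := by
    calc Module.finrank (ZMod 2) ↥(LinearMap.range A.vecMulLinear)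
        ≤ Module.finrank (ZMod 2) ↥(LinearMap.range Sᵀ.vecMulLinear) :=
          Submodule.finrank_mono hle
      _ ≤ Module.finrank (ZMod 2) (Fin s → ZMod 2) := LinearMap.finrank_range_le _
      _ = s := Module.finrank_fin_fun (ZMod 2)
  rw [hker]
  omega
end

section
/- Let n be even and let G = [I_{n−1} | 1] generate the even-weight code Eₙ ⊆ F₂ⁿ (where 1 is the all-ones column). For every column vector v ∈ F₂^{n−1}, the hull of the code C' generated by [I_{n−1} | 1 | v] has dimension at most 1, and is contained in the span of the vector (1,...,1,0) of length n+1. -/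
open Matrix

/-- The matrix [I_{n-1} | 1 | v] (here the number of rows is m = n - 1): identity block,
an all-ones column, and the column v. -/
def augMat (m : ℕ) (v : Fin m → ZMod 2) :
    Matrix (Fin m) (Fin m ⊕ (Unit ⊕ Unit)) (ZMod 2) :=
  fun i => Sum.elim (fun j => if i = j then 1 else 0)
    (Sum.elim (fun _ => 1) (fun _ => v i))

/-- The vector (1, ..., 1, 0) of length n + 1: ones on the first n = m + 1 coordinates,
zero on the last coordinate. -/
def onesZero (m : ℕ) : Fin m ⊕ (Unit ⊕ Unit) → ZMod 2 :=
  Sum.elim (fun _ => 1) (Sum.elim (fun _ => 1) (fun _ => 0))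

/-- with n = m + 1 even, for any column v, the hull of the code generated by
[I_{n-1} | 1 | v] is contained in the span of (1,...,1,0), so it has dimension at most 1. -/
theorem stmt_13 {m : ℕ} (hn : Even (m + 1)) (v : Fin m → ZMod 2) :
    hullCode (rowSpace (augMat m v)) ≤ Submodule.span (ZMod 2) {onesZero m} ∧
    Module.finrank (ZMod 2) ↥(hullCode (rowSpace (augMat m v))) ≤ 1 := by
  have hle : hullCode (rowSpace (augMat m v)) ≤ Submodule.span (ZMod 2) {onesZero m} := by
    intro c hc
    rw [hullCode, Submodule.mem_inf] at hc
    obtain ⟨hcC, hcD⟩ := hc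
    rw [rowSpace, Submodule.mem_span_range_iff_exists_fun] at hcC
    obtain ⟨a, ha⟩ := hcC
    set s := ∑ i, a i with hs
    set t := ∑ i, a i * v i with ht
    set V := ∑ i, v i with hV
    -- coordinates of c
    have hcl : ∀ j, c (Sum.inl j) = a j := by
      intro j
      rw [← ha]
      simp [Finset.sum_apply, augMat]
    have hc1 : c (Sum.inr (Sum.inl ())) = s := by
      rw [← ha]; simp [Finset.sum_apply, augMat, hs]
    have hc2 : c (Sum.inr (Sum.inr ())) = t := by
      rw [← ha]; simp [Finset.sum_apply, augMat, ht]
    -- dual equations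
    have key : ∀ i, a i = s + t * v i := by
      intro i
      have hrow : augMat m v i ∈ rowSpace (augMat m v) :=
        Submodule.subset_span ⟨i, rfl⟩
      have h0 := hcD _ hrow
      rw [dotProduct, Fintype.sum_sum_type] at h0
      simp only [Fintype.sum_sum_type, Finset.univ_unique, Finset.sum_singleton] at h0
      simp only [augMat, Sum.elim_inl, Sum.elim_inr, mul_ite, mul_one, mul_zero,
        Finset.sum_ite_eq, Finset.mem_univ, if_true] at h0
      rw [hcl i, hc1, hc2] at h0
      -- h0 : a i + (s * 1 + t * v i) = 0
      have : a i + (s + t * v i) = 0 := by linear_combination h0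
      have h2 : ∀ x : ZMod 2, x + x = 0 := by decide
      calc a i = a i + (s + t * v i) + (s + t * v i) := by
              rw [add_assoc, h2]; ring
        _ = s + t * v i := by rw [this]; ring
    have hm1 : (m : ZMod 2) = 1 := by
      obtain ⟨k, hk⟩ := Nat.not_even_iff_odd.mp (Nat.even_add_one.mp hn)
      subst hk
      push_cast
      simp [show (2 : ZMod 2) = 0 from rfl]
    have hvv : ∀ x : ZMod 2, x * x = x := by decide
    have h2 : ∀ x : ZMod 2, x + x = 0 := by decide
    -- s = m*s + t*V
    have hseq : s = s + t * V := by
      calc s = ∑ i, a i := hs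
        _ = ∑ i, (s + t * v i) := by exact Finset.sum_congr rfl fun i _ => key i
        _ = (m : ZMod 2) * s + t * V := by
            rw [Finset.sum_add_distrib, Finset.sum_const, ← Finset.mul_sum, hV,
              Finset.card_univ, Fintype.card_fin, nsmul_eq_mul]
        _ = s + t * V := by rw [hm1, one_mul]
    have htV : t * V = 0 := by linear_combination -hseq
    have ht0 : t = 0 := by
      have hteq : t = s * V + t * V := by
        calc t = ∑ i, a i * v i := ht
          _ = ∑ i, (s + t * v i) * v i := by
              exact Finset.sum_congr rfl fun i _ => by rw [key i]
          _ = s * V + t * V := by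
              have he : ∀ i ∈ Finset.univ, (s + t * v i) * v i = s * v i + t * v i := by
                intro i _; rw [add_mul, mul_assoc, hvv]
              rw [Finset.sum_congr rfl he, Finset.sum_add_distrib,
                ← Finset.mul_sum, ← Finset.mul_sum, hV]
      have hteq2 : t = s * V := by rw [hteq, htV, add_zero]
      calc t = t * V := by rw [hteq2, mul_assoc, hvv]
        _ = 0 := htV
    -- now c = s • onesZero
    rw [Submodule.mem_span_singleton]
    refine ⟨s, funext fun j => ?_⟩
    rcases j with j | j | j
    · rw [hcl j, key j, ht0]
      simp [onesZero]
    · rw [hc1]; simp [onesZero]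
    · rw [hc2, ht0]; simp [onesZero]
  refine ⟨hle, ?_⟩
  calc Module.finrank (ZMod 2) ↥(hullCode (rowSpace (augMat m v)))
      ≤ Module.finrank (ZMod 2) ↥(Submodule.span (ZMod 2) {onesZero m}) :=
        Submodule.finrank_mono hle
    _ ≤ 1 := by
        have := finrank_span_le_card (R := ZMod 2) ({onesZero m} : Set (Fin m ⊕ (Unit ⊕ Unit) → ZMod 2))
        simpa using this
end

section
/- Let n be odd and Eₙ the even-weight code of length n with generator matrix G = [I_{n−1} | 1]. For every column vector v ∈ F₂^{n−1}, the code generated by [I_{n−1} | 1 | v] has trivial hull. -/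
open Matrix

lemma zmod2_mul_self : ∀ a : ZMod 2, a * a = a := by decide
lemma zmod2_add_eq_zero' : ∀ {a b : ZMod 2}, a + b = 0 → a = b := by decide

/-- with n = m + 1 odd, for any column v, the code generated by
[I_{n-1} | 1 | v] has trivial hull. -/
theorem stmt_14 {m : ℕ} (hn : Odd (m + 1)) (v : Fin m → ZMod 2) :
    hullCode (rowSpace (augMat m v)) = ⊥ := by
  apply le_antisymm _ bot_le
  rintro c ⟨hcC, hcD⟩
  change c ∈ Submodule.span (ZMod 2) (Set.range (augMat m v).row) at hcC
  rw [← range_vecMulLinear] at hcC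
  obtain ⟨x, rfl⟩ := hcC
  have hcD' : ∀ cc ∈ rowSpace (augMat m v),
      ((augMat m v).vecMulLinear x) ⬝ᵥ cc = 0 := hcD
  set s : ZMod 2 := ∑ i, x i with hs
  set t : ZMod 2 := ∑ i, x i * v i with ht
  set w : ZMod 2 := ∑ i, v i with hw
  have hm2 : (m : ZMod 2) = 0 := by
    obtain ⟨k, hk⟩ := hn
    have hmk : m = 2 * k := by omega
    rw [hmk]
    simp
    exact Or.inl (by decide)
  -- the components of the codeword
  have hx : ∀ j, ((augMat m v).vecMulLinear x) (Sum.inl j) = x j := by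
    intro j
    simp only [Matrix.vecMulLinear_apply, Matrix.vecMul, dotProduct, augMat,
      Sum.elim_inl, mul_ite, mul_one, mul_zero]
    rw [Finset.sum_ite_eq' Finset.univ j x]
    simp
  have hss : ((augMat m v).vecMulLinear x) (Sum.inr (Sum.inl ())) = s := by
    simp [Matrix.vecMul, dotProduct, augMat, hs]
  have htt : ((augMat m v).vecMulLinear x) (Sum.inr (Sum.inr ())) = t := by
    simp [Matrix.vecMul, dotProduct, augMat, ht]
  -- key equation from orthogonality with each row
  have key : ∀ j, x j = s + t * v j := by
    intro j
    have hrow : augMat m v j ∈ rowSpace (augMat m v) :=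
      Submodule.subset_span ⟨j, rfl⟩
    have h0 := hcD' _ hrow
    rw [dotProduct, Fintype.sum_sum_type] at h0
    simp only [Fintype.sum_sum_type, Finset.univ_unique, Finset.sum_singleton,
      augMat, Sum.elim_inl, Sum.elim_inr, mul_ite, mul_one, mul_zero, hss, htt] at h0
    rw [Finset.sum_ite_eq Finset.univ j] at h0
    simp only [Finset.mem_univ, if_true, hx] at h0
    exact zmod2_add_eq_zero' (by linear_combination h0)
  -- now derive s = t * w
  have hsval : s = t * w := by
    calc s = ∑ i, x i := hs
    _ = ∑ i : Fin m, (s + t * v i) := by exact Finset.sum_congr rfl fun i _ => key i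
    _ = (m : ZMod 2) * s + t * w := by
        rw [Finset.sum_add_distrib, Finset.sum_const, ← Finset.mul_sum]
        simp [hw, nsmul_eq_mul]
    _ = t * w := by rw [hm2]; ring
  have htval : t = s * w + t * w := by
    calc t = ∑ i, x i * v i := ht
    _ = ∑ i : Fin m, (s + t * v i) * v i := by
        exact Finset.sum_congr rfl fun i _ => by rw [key i]
    _ = s * w + t * w := by
        simp only [add_mul, mul_assoc, zmod2_mul_self, Finset.sum_add_distrib,
          ← Finset.mul_sum, hw]
  have ht0 : t = 0 := by
    have h1 : t = t * w + t * w := by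
      conv_lhs => rw [htval]
      rw [hsval, mul_assoc, zmod2_mul_self]
    exact h1.trans (CharTwo.add_self_eq_zero _)
  have hs0 : s = 0 := by rw [hsval, ht0, zero_mul]
  have hx0 : ∀ j, x j = 0 := fun j => by rw [key j, hs0, ht0]; ring
  have : x = 0 := funext hx0
  subst this
  simp
end

section
/- Let A be a k×n matrix over F₂ generating an LCD code (so A·Aᵀ is invertible), and suppose the code ⟨A⟩ is even (all codewords have even weight). Then for every column vector v ∈ F₂ᵏ, the code generated by [A | v] has trivial hull. -/
open Matrix

lemma dot_self_eq_hammingNorm {ι : Type*} [Fintype ι] (x : ι → ZMod 2) :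
    x ⬝ᵥ x = (hammingNorm x : ZMod 2) := by
  unfold hammingNorm dotProduct
  rw [Finset.card_filter, Nat.cast_sum]
  apply Finset.sum_congr rfl
  intro i _
  generalize x i = a
  revert a
  exact (by decide : ∀ a : ZMod 2, a * a = ((if a ≠ 0 then 1 else 0 : ℕ) : ZMod 2))

/-- if A generates an even LCD code, then for any appended column v the code
generated by [A | v] has trivial hull. -/
theorem stmt_15 {k n : ℕ} (A : Matrix (Fin k) (Fin n) (ZMod 2))
    (hA : LinearIndependent (ZMod 2) (fun i => A i))
    (hLCD : IsUnit (A * Aᵀ))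
    (heven : ∀ x ∈ rowSpace A, Even (hammingNorm x))
    (v : Fin k → ZMod 2) :
    hullCode (rowSpace ((fun i => Sum.elim (A i) (fun _ => v i)) :
      Matrix (Fin k) (Fin n ⊕ Unit) (ZMod 2))) = ⊥ := by
  set B : Matrix (Fin k) (Fin n ⊕ Unit) (ZMod 2) :=
    fun i => Sum.elim (A i) (fun _ => v i) with hBdef
  rw [Submodule.eq_bot_iff]
  intro c hc
  obtain ⟨hcC, hcD⟩ := hc
  obtain ⟨y, hy⟩ := (Submodule.mem_span_range_iff_exists_fun (ZMod 2)).mp hcC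
  -- the restriction to the first n coordinates
  set u : Fin n → ZMod 2 := fun t => c (Sum.inl t) with hudef
  have hu : u = Aᵀ *ᵥ y := by
    funext t
    simp only [hudef, ← hy, Finset.sum_apply, Pi.smul_apply, smul_eq_mul, mulVec,
      dotProduct, transpose_apply, hBdef, Sum.elim_inl]
    exact Finset.sum_congr rfl fun i _ => mul_comm _ _
  have huA : u ∈ rowSpace A := by
    apply (Submodule.mem_span_range_iff_exists_fun (ZMod 2)).mpr ⟨y, ?_⟩
    funext t
    simp only [hu, Finset.sum_apply, Pi.smul_apply, smul_eq_mul, mulVec, dotProduct,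
      transpose_apply]
    exact Finset.sum_congr rfl fun i _ => mul_comm _ _
  -- u has even weight, hence u ⬝ᵥ u = 0
  have huu : u ⬝ᵥ u = 0 := by
    rw [dot_self_eq_hammingNorm]
    obtain ⟨m, hm⟩ := heven u huA
    rw [hm]
    push_cast
    rw [← two_mul]
    simp [show (2 : ZMod 2) = 0 by decide]
  -- c ⬝ᵥ c = 0, so last coordinate is 0
  have hself : c ⬝ᵥ c = 0 := hcD c hcC
  have hsplit : c ⬝ᵥ c = u ⬝ᵥ u + c (Sum.inr ()) * c (Sum.inr ()) := by
    simp [dotProduct, Fintype.sum_sum_type, hudef]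
  have hlast : c (Sum.inr ()) = 0 := by
    have h0 : c (Sum.inr ()) * c (Sum.inr ()) = 0 := by
      rw [hsplit, huu, zero_add] at hself; exact hself
    generalize c (Sum.inr ()) = a at h0 ⊢
    revert h0; revert a; decide
  -- u is orthogonal to every row of A
  have hAu : A *ᵥ u = 0 := by
    funext j
    have hj : c ⬝ᵥ B j = 0 := hcD (B j) (Submodule.subset_span ⟨j, rfl⟩)
    have : c ⬝ᵥ B j = (A *ᵥ u) j + c (Sum.inr ()) * v j := by
      simp [dotProduct, Fintype.sum_sum_type, hBdef, mulVec, hudef, mul_comm]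
    rw [this, hlast, zero_mul, add_zero] at hj
    simpa using hj
  -- hence y = 0 by invertibility of A * Aᵀ
  have hMy : (A * Aᵀ) *ᵥ y = 0 := by
    rw [← Matrix.mulVec_mulVec, ← hu, hAu]
  have hdet : IsUnit (A * Aᵀ).det := (Matrix.isUnit_iff_isUnit_det _).mp hLCD
  have hy0 : y = 0 := by
    have := congrArg (fun w => (A * Aᵀ)⁻¹ *ᵥ w) hMy
    simpa [Matrix.mulVec_mulVec, Matrix.nonsing_inv_mul _ hdet] using this
  rw [← hy, hy0]
  simp
end
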